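/- Let K = ⟨a²⟩ × ⟨b⟩ × ⟨c₁⟩ × ⋯ × ⟨c_{m-3}⟩ be an elementary abelian 2-group of rank m-1, with m ≥ 4. Then the map τ defined by a² ↦ b, b ↦ a², c_{2i+1} ↦ c_{2i-1}c_{2i}c_{2i+2}, c_{2i+2} ↦ c_{2i-1}c_{2i}c_{2i+1} (for 0 ≤ i ≤ ⌊(m-5)/2⌋, with convention c₋₁ = c₀ = 1), and additionally c_{m-3} ↦ c_{m-3} if m is even, extends to an automorphism of K of order 2. -/

import Mathlib

/-- `K`, an elementary abelian 2-group of rank `m - 1`, with basis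
`a², b, c₁, …, c_{m-3}` corresponding to the coordinates `0, 1, 2, …, m - 2`. -/
abbrev Kgrp (m : ℕ) := Multiplicative (Fin (m - 1) → ZMod 2)

/-- The `j`-th basis vector of `K` (as a multiplicative generator). -/
def kGen (m j : ℕ) : Kgrp m :=
  Multiplicative.ofAdd (fun i : Fin (m - 1) => if (i : ℕ) = j then 1 else 0)

/-- The generator `a²` of `K`. -/
def aSq (m : ℕ) : Kgrp m := kGen m 0

/-- The generator `b` of `K`. -/
def bK (m : ℕ) : Kgrp m := kGen m 1

/-- The generator `c j` of `K` for `1 ≤ j ≤ m - 3`; by convention `c 0 = 1`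
(covering `c₋₁ = c₀ = 1`), and `c j = 1` for `j > m - 3`. -/
def cK (m j : ℕ) : Kgrp m := if j = 0 then 1 else kGen m (j + 1)

/-! ### Auxiliary additive-level definitions -/

def eV (m t : ℕ) : Fin (m-1) → ZMod 2 := fun j => if (j : ℕ) = t then 1 else 0
def cV (m j : ℕ) : Fin (m-1) → ZMod 2 := if j = 0 then 0 else eV m (j+1)
def colV (m K : ℕ) : Fin (m-1) → ZMod 2 :=
  if K = 0 then eV m 1
  else if K = 1 then eV m 0
  else if K % 2 = 0 then
    if K + 2 ≤ m - 1 then cV m (K-3) + cV m (K-2) + cV m K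
    else cV m (K-1)
  else cV m (K-4) + cV m (K-3) + cV m (K-2)

def fV (m : ℕ) (x : Fin (m-1) → ZMod 2) : Fin (m-1) → ZMod 2 :=
  ∑ l : Fin (m-1), x l • colV m (l : ℕ)

lemma twomul (m : ℕ) (x : Fin (m-1) → ZMod 2) : 2 * x = 0 := by
  funext j
  show (2 : ZMod 2) * x j = 0
  rw [show (2 : ZMod 2) = 0 by decide, zero_mul]

lemma fV_add (m : ℕ) (x y : Fin (m-1) → ZMod 2) : fV m (x + y) = fV m x + fV m y := by
  simp [fV, add_smul, Finset.sum_add_distrib]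

lemma fV_smul (m : ℕ) (c : ZMod 2) (x : Fin (m-1) → ZMod 2) :
    fV m (c • x) = c • fV m x := by
  simp only [fV, Finset.smul_sum, Pi.smul_apply, smul_eq_mul, mul_smul]

lemma fV_eV (m t : ℕ) (ht : t < m - 1) : fV m (eV m t) = colV m t := by
  have : ∀ l : Fin (m-1), eV m t l • colV m (l:ℕ) =
      if l = ⟨t, ht⟩ then colV m (l:ℕ) else 0 := by
    intro l
    simp only [eV, Fin.ext_iff]
    split_ifs <;> simp
  rw [fV]
  simp only [this]
  simp

lemma cV_ne (m j : ℕ) (h : j ≠ 0) : cV m j = eV m (j+1) := by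
  unfold cV; rw [if_neg h]

/-! ### Shape lemmas for `colV` -/

lemma colV_zero (m : ℕ) : colV m 0 = eV m 1 := rfl

lemma colV_one (m : ℕ) : colV m 1 = eV m 0 := rfl

lemma colV_two (m : ℕ) (h : 4 ≤ m - 1) : colV m 2 = eV m 3 := by
  unfold colV
  rw [if_neg (by omega), if_neg (by omega), if_pos (by omega), if_pos (by omega)]
  simp [cV]

lemma colV_three (m : ℕ) : colV m 3 = eV m 2 := by
  unfold colV
  rw [if_neg (by omega), if_neg (by omega), if_neg (by omega)]
  simp [cV]

lemma colV_even (m k : ℕ) (h : 2*k+6 ≤ m-1) :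
    colV m (2*k+4) = eV m (2*k+2) + eV m (2*k+3) + eV m (2*k+5) := by
  unfold colV
  rw [if_neg (by omega), if_neg (by omega), if_pos (by omega), if_pos (by omega),
    cV_ne m (2*k+4-3) (by omega), cV_ne m (2*k+4-2) (by omega), cV_ne m (2*k+4) (by omega),
    show 2*k+4-3+1 = 2*k+2 by omega, show 2*k+4-2+1 = 2*k+3 by omega,
    show 2*k+4+1 = 2*k+5 by omega]

lemma colV_even2 (m k : ℕ) (hk : 1 ≤ k) (h : 2*k+4 ≤ m-1) :
    colV m (2*k+2) = eV m (2*k) + eV m (2*k+1) + eV m (2*k+3) := by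
  unfold colV
  rw [if_neg (by omega), if_neg (by omega), if_pos (by omega), if_pos (by omega),
    cV_ne m (2*k+2-3) (by omega), cV_ne m (2*k+2-2) (by omega), cV_ne m (2*k+2) (by omega),
    show 2*k+2-3+1 = 2*k by omega, show 2*k+2-2+1 = 2*k+1 by omega,
    show 2*k+2+1 = 2*k+3 by omega]

lemma colV_odd (m k : ℕ) : colV m (2*k+5) = eV m (2*k+2) + eV m (2*k+3) + eV m (2*k+4) := by
  unfold colV
  rw [if_neg (by omega), if_neg (by omega), if_neg (by omega),
    cV_ne m (2*k+5-4) (by omega), cV_ne m (2*k+5-3) (by omega), cV_ne m (2*k+5-2) (by omega),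
    show 2*k+5-4+1 = 2*k+2 by omega, show 2*k+5-3+1 = 2*k+3 by omega,
    show 2*k+5-2+1 = 2*k+4 by omega]

lemma colV_odd2 (m k : ℕ) (hk : 1 ≤ k) :
    colV m (2*k+3) = eV m (2*k) + eV m (2*k+1) + eV m (2*k+2) := by
  unfold colV
  rw [if_neg (by omega), if_neg (by omega), if_neg (by omega),
    cV_ne m (2*k+3-4) (by omega), cV_ne m (2*k+3-3) (by omega), cV_ne m (2*k+3-2) (by omega),
    show 2*k+3-4+1 = 2*k by omega, show 2*k+3-3+1 = 2*k+1 by omega,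
    show 2*k+3-2+1 = 2*k+2 by omega]

lemma colV_last (m K : ℕ) (h2 : 2 ≤ K) (he : K % 2 = 0) (h : ¬(K+2 ≤ m-1)) :
    colV m K = eV m K := by
  unfold colV
  rw [if_neg (by omega), if_neg (by omega), if_pos he, if_neg h,
    cV_ne m (K-1) (by omega), show K-1+1 = K by omega]

/-! ### The key involution property -/

lemma fV_colV (m : ℕ) (hm : 4 ≤ m) (K : ℕ) (hK : K < m-1) :
    fV m (colV m K) = eV m K := by
  by_cases h0 : K = 0
  · subst h0
    rw [colV_zero, fV_eV m 1 (by omega), colV_one]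
  by_cases h1 : K = 1
  · subst h1
    rw [colV_one, fV_eV m 0 (by omega), colV_zero]
  by_cases h2 : K = 2
  · subst h2
    by_cases hp : 2+2 ≤ m-1
    · rw [colV_two m (by omega), fV_eV m 3 (by omega), colV_three]
    · rw [colV_last m 2 (by omega) (by omega) (by omega), fV_eV m 2 (by omega),
        colV_last m 2 (by omega) (by omega) (by omega)]
  by_cases h3 : K = 3
  · subst h3
    rw [colV_three, fV_eV m 2 (by omega), colV_two m (by omega)]
  rcases Nat.even_or_odd K with he | ho
  · have heK : K % 2 = 0 := Nat.even_iff.mp he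
    obtain ⟨k, rfl⟩ : ∃ k, K = 2*k+4 := ⟨(K-4)/2, by omega⟩
    by_cases hp : 2*k+4+2 ≤ m-1
    · rw [colV_even m k (by omega), fV_add, fV_add, fV_eV m (2*k+2) (by omega),
        fV_eV m (2*k+3) (by omega), fV_eV m (2*k+5) (by omega), colV_odd m k]
      by_cases hk0 : k = 0
      · subst hk0
        rw [show 2*0+2 = 2 from rfl, show 2*0+3 = 3 from rfl, show 2*0+4 = 4 from rfl,
          colV_two m (by omega), colV_three]
        abel_nf
        simp [twomul]
      · rw [colV_even2 m k (by omega) (by omega), colV_odd2 m k (by omega)]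
        abel_nf
        simp [twomul]
    · rw [colV_last m (2*k+4) (by omega) (by omega) hp, fV_eV m (2*k+4) (by omega),
        colV_last m (2*k+4) (by omega) (by omega) hp]
  · have hoK : K % 2 = 1 := Nat.odd_iff.mp ho
    obtain ⟨k, rfl⟩ : ∃ k, K = 2*k+5 := ⟨(K-5)/2, by omega⟩
    rw [colV_odd m k, fV_add, fV_add, fV_eV m (2*k+2) (by omega),
      fV_eV m (2*k+3) (by omega), fV_eV m (2*k+4) (by omega), colV_even m k (by omega)]
    by_cases hk0 : k = 0
    · subst hk0
      rw [show 2*0+2 = 2 from rfl, show 2*0+3 = 3 from rfl,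
        colV_two m (by omega), colV_three]
      abel_nf
      simp [twomul]
    · rw [colV_even2 m k (by omega) (by omega), colV_odd2 m k (by omega)]
      abel_nf
      simp [twomul]

lemma fV_sum (m : ℕ) {ι : Type*} (s : Finset ι) (g : ι → (Fin (m-1) → ZMod 2)) :
    fV m (∑ i ∈ s, g i) = ∑ i ∈ s, fV m (g i) := by
  classical
  induction s using Finset.induction_on with
  | empty => simp [fV]
  | insert _ _ h ih => simp [Finset.sum_insert h, fV_add, ih]

lemma sum_eV (m : ℕ) (x : Fin (m-1) → ZMod 2) :
    ∑ l : Fin (m-1), x l • eV m (l:ℕ) = x := by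
  funext j
  rw [Finset.sum_apply]
  have : ∀ l : Fin (m-1), (x l • eV m (l:ℕ)) j = if j = l then x l else 0 := by
    intro l
    simp only [eV, Pi.smul_apply, smul_eq_mul, Fin.val_inj]
    rcases eq_or_ne j l with h | h
    · simp [h]
    · simp [h, Ne.symm h]
  simp only [this]
  simp

lemma fV_fV (m : ℕ) (hm : 4 ≤ m) (x : Fin (m-1) → ZMod 2) : fV m (fV m x) = x := by
  have h1 : fV m x = ∑ l : Fin (m-1), x l • colV m (l:ℕ) := rfl
  rw [h1, fV_sum]
  have : ∀ l : Fin (m-1), fV m (x l • colV m (l:ℕ)) = x l • eV m (l:ℕ) := by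
    intro l
    rw [fV_smul, fV_colV m hm (l:ℕ) l.2]
  simp only [this]
  exact sum_eV m x

def tauA (m : ℕ) (hm : 4 ≤ m) : (Fin (m-1) → ZMod 2) ≃+ (Fin (m-1) → ZMod 2) where
  toFun := fV m
  invFun := fV m
  left_inv := fV_fV m hm
  right_inv := fV_fV m hm
  map_add' := fV_add m

lemma cK_ofAdd (m j : ℕ) : cK m j = Multiplicative.ofAdd (cV m j) := by
  unfold cK cV
  split_ifs with h
  · rfl
  · rfl

/-- theorem-level colV computations -/
lemma colV_T1 (m i : ℕ) (h : 2*i+5 ≤ m) :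
    colV m (2*i+2) = cV m (2*i-1) + cV m (2*i) + cV m (2*i+2) := by
  unfold colV
  rw [if_neg (by omega), if_neg (by omega), if_pos (by omega), if_pos (by omega),
    show 2*i+2-3 = 2*i-1 by omega, show 2*i+2-2 = 2*i by omega]

lemma colV_T2 (m i : ℕ) (h : 2*i+5 ≤ m) :
    colV m (2*i+3) = cV m (2*i-1) + cV m (2*i) + cV m (2*i+1) := by
  unfold colV
  rw [if_neg (by omega), if_neg (by omega), if_neg (by omega),
    show 2*i+3-4 = 2*i-1 by omega, show 2*i+3-3 = 2*i by omega,
    show 2*i+3-2 = 2*i+1 by omega]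

lemma colV_T3 (m : ℕ) (hme : Even m) (hm : 4 ≤ m) :
    colV m (m-2) = cV m (m-3) := by
  obtain ⟨t, rfl⟩ := hme
  unfold colV
  rw [if_neg (by omega), if_neg (by omega), if_pos (by omega), if_neg (by omega),
    show t+t-2-1 = t+t-3 by omega]


/-- The map `τ` defined by `a² ↦ b`, `b ↦ a²`, `c_{2i+1} ↦ c_{2i-1}c_{2i}c_{2i+2}`,
`c_{2i+2} ↦ c_{2i-1}c_{2i}c_{2i+1}` for `0 ≤ i ≤ ⌊(m-5)/2⌋` (equivalently `2i + 5 ≤ m`),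
with the convention `c₋₁ = c₀ = 1`, and additionally `c_{m-3} ↦ c_{m-3}` if `m` is even,
extends to an automorphism of `K` of order 2. -/
theorem elementary_abelian_aut_tau (m : ℕ) (hm : 4 ≤ m) :
    ∃ τ : MulAut (Kgrp m),
      orderOf τ = 2 ∧
      τ (aSq m) = bK m ∧
      τ (bK m) = aSq m ∧
      (∀ i : ℕ, 2 * i + 5 ≤ m →
        τ (cK m (2 * i + 1)) = cK m (2 * i - 1) * cK m (2 * i) * cK m (2 * i + 2) ∧
        τ (cK m (2 * i + 2)) = cK m (2 * i - 1) * cK m (2 * i) * cK m (2 * i + 1)) ∧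
      (Even m → τ (cK m (m - 3)) = cK m (m - 3)) := by
  refine ⟨AddEquiv.toMultiplicative (tauA m hm), ?_, ?_, ?_, ?_, ?_⟩
  · -- order 2
    set τ := AddEquiv.toMultiplicative (tauA m hm) with hτ
    have h2 : τ ^ 2 = 1 := by
      rw [pow_two]
      ext x : 1
      show Multiplicative.ofAdd (fV m (fV m (Multiplicative.toAdd x))) = x
      rw [fV_fV m hm]
      rfl
    have hne : τ ≠ 1 := by
      intro h
      have h1 : τ (aSq m) = aSq m := by rw [h]; rfl
      have h2 : τ (aSq m) = Multiplicative.ofAdd (eV m 1) := by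
        show Multiplicative.ofAdd (fV m (eV m 0)) = _
        rw [fV_eV m 0 (by omega), colV_zero]
      rw [h2] at h1
      have := congrFun (congrArg Multiplicative.toAdd h1) ⟨0, by omega⟩
      simp only [eV, aSq, kGen, toAdd_ofAdd] at this
      norm_num at this
    exact orderOf_eq_prime h2 hne
  · show Multiplicative.ofAdd (fV m (eV m 0)) = bK m
    rw [fV_eV m 0 (by omega), colV_zero]
    rfl
  · show Multiplicative.ofAdd (fV m (eV m 1)) = aSq m
    rw [fV_eV m 1 (by omega), colV_one]
    rfl
  · intro i hi
    constructor
    · show Multiplicative.ofAdd (fV m (cV m (2*i+1))) = _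
      rw [show cV m (2*i+1) = eV m (2*i+2) from by unfold cV; rw [if_neg (by omega)],
        fV_eV m (2*i+2) (by omega), colV_T1 m i hi,
        cK_ofAdd, cK_ofAdd, cK_ofAdd, ← ofAdd_add, ← ofAdd_add]
    · show Multiplicative.ofAdd (fV m (cV m (2*i+2))) = _
      rw [show cV m (2*i+2) = eV m (2*i+3) from by unfold cV; rw [if_neg (by omega)],
        fV_eV m (2*i+3) (by omega), colV_T2 m i hi,
        cK_ofAdd, cK_ofAdd, cK_ofAdd, ← ofAdd_add, ← ofAdd_add]
  · intro hme
    show Multiplicative.ofAdd (fV m (cV m (m-3))) = _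
    rw [show cV m (m-3) = eV m (m-2) from by
        unfold cV; rw [if_neg (by omega), show m-3+1 = m-2 by omega],
      fV_eV m (m-2) (by omega), colV_T3 m hme hm, cK_ofAdd]
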